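/- Let n₁ be a prime, and let t₁, …, t_N ∈ [0,1) be real numbers such that t₁, …, t_N, 1 are linearly independent over ℚ. For each i = 1, …, N let σ_i ∈ {1, −1} and let k_i be an integer with 0 < k_i < n₁, and set s_i = σ_i·t_i + k_i/n₁. Let α : {1, …, N} → {1, −1} be any sign function. Then there exists a positive integer n₄ such that for every i = 1, …, N the number α(i)·( cos(2π n₄ t_i) − cos(2π n₄ s_i) ) is strictly positive. -/

import Mathlib

open Finset Complex Real

lemma lemA (L : ℕ) (x : ℝ) : ((4:ℂ))^L * ((Real.cos (x/2) : ℝ) : ℂ)^(2*L)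
    = ∑ r ∈ Finset.range (2*L+1), ((2*L).choose r : ℂ)
        * Complex.exp ((((r:ℝ) - L) * x) * Complex.I) := by
  have hbase : ((2:ℂ)) * ((Real.cos (x/2) : ℝ) : ℂ)
      = Complex.exp (((x/2 : ℝ) : ℂ) * Complex.I) + Complex.exp (((-(x/2) : ℝ) : ℂ) * Complex.I) := by
    rw [Complex.exp_mul_I, Complex.exp_mul_I, Complex.ofReal_cos, Complex.ofReal_neg,
      Complex.cos_neg, Complex.sin_neg]
    ring
  calc ((4:ℂ))^L * ((Real.cos (x/2) : ℝ) : ℂ)^(2*L)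
      = ((2:ℂ) * ((Real.cos (x/2) : ℝ) : ℂ))^(2*L) := by
        rw [mul_pow, show ((2:ℂ))^(2*L) = 4^L by rw [pow_mul]; norm_num]
    _ = (Complex.exp (((x/2 : ℝ) : ℂ) * Complex.I) + Complex.exp (((-(x/2) : ℝ) : ℂ) * Complex.I))^(2*L) := by
        rw [hbase]
    _ = ∑ r ∈ Finset.range (2*L+1), Complex.exp (((x/2 : ℝ) : ℂ) * Complex.I)^r
          * Complex.exp (((-(x/2) : ℝ) : ℂ) * Complex.I)^(2*L - r) * ((2*L).choose r : ℂ) :=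
        add_pow _ _ _
    _ = ∑ r ∈ Finset.range (2*L+1), ((2*L).choose r : ℂ)
          * Complex.exp ((((r:ℝ) - L) * x) * Complex.I) := by
        refine Finset.sum_congr rfl (fun r hr => ?_)
        have hrle : r ≤ 2*L := Nat.lt_succ_iff.mp (Finset.mem_range.mp hr)
        rw [← Complex.exp_nat_mul, ← Complex.exp_nat_mul, ← Complex.exp_add]
        have : ((r:ℂ)) * ((((x/2 : ℝ)):ℂ) * Complex.I) + ((2*L - r : ℕ) : ℂ) * ((((-(x/2) : ℝ)):ℂ) * Complex.I)
            = (((((r:ℝ) - L) * x) : ℝ) : ℂ) * Complex.I := by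
          rw [Nat.cast_sub hrle]
          push_cast
          ring
        rw [this]; push_cast; ring

lemma lemB (N L : ℕ) (y : Fin N → ℝ) :
    ((4:ℂ))^(L*N) * ((∏ i, (Real.cos (y i/2))^(2*L) : ℝ) : ℂ)
      = ∑ j ∈ Fintype.piFinset (fun _ : Fin N => Finset.range (2*L+1)),
        ((∏ i, ((2*L).choose (j i) : ℝ) : ℝ) : ℂ)
          * Complex.exp (((∑ i, ((j i : ℝ) - (L:ℝ)) * y i : ℝ) : ℂ) * Complex.I) := by
  have h1 : ((4:ℂ))^(L*N) * ((∏ i, (Real.cos (y i/2))^(2*L) : ℝ) : ℂ)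
      = ∏ i, (((4:ℂ))^L * ((Real.cos (y i/2) : ℝ) : ℂ)^(2*L)) := by
    rw [Finset.prod_mul_distrib, Finset.prod_const, Finset.card_univ, Fintype.card_fin,
      ← pow_mul]
    push_cast
    ring
  rw [h1, Finset.prod_congr rfl (fun i _ => lemA L (y i)), Finset.prod_univ_sum]
  refine Finset.sum_congr rfl (fun j hj => ?_)
  rw [Finset.prod_mul_distrib, ← Complex.exp_sum]
  push_cast
  congr 1
  rw [← Finset.sum_mul]

lemma kron_semicircle (N : ℕ) (u θ : Fin N → ℝ)
    (hu : ∀ K : Fin N → ℤ, (∃ i, K i ≠ 0) → ∀ p : ℤ,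
      (∑ i, (K i : ℝ) * u i) ≠ 2 * Real.pi * p) :
    ∃ m : ℕ, ∀ i, 0 < Real.cos (θ i + m * u i) := by
  by_contra hcon
  push_neg at hcon
  -- choose L with (2L+1)^N < 2^L
  obtain ⟨L, hL1, hL⟩ : ∃ L : ℕ, 1 ≤ L ∧ (2*(L:ℝ)+1)^N < 2^L := by
    have ht := tendsto_pow_const_div_const_pow_of_one_lt N (one_lt_two (α := ℝ))
    have h3 : (0:ℝ) < ((3:ℝ)^N)⁻¹ := by positivity
    have hev : ∀ᶠ l : ℕ in Filter.atTop, ((l:ℝ))^N / 2^l < ((3:ℝ)^N)⁻¹ :=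
      ht.eventually_lt_const h3
    obtain ⟨l, hl1, hl2⟩ := (Filter.eventually_ge_atTop 1).and hev |>.exists
    refine ⟨l, hl1, ?_⟩
    have hl1' : (1:ℝ) ≤ l := by exact_mod_cast hl1
    have h2pos : (0:ℝ) < 2^l := by positivity
    rw [div_lt_iff₀ h2pos] at hl2
    calc (2*(l:ℝ)+1)^N ≤ (3*(l:ℝ))^N := by
          apply pow_le_pow_left₀ (by positivity)
          linarith
      _ = 3^N * (l:ℝ)^N := by rw [mul_pow]
      _ < 3^N * (((3:ℝ)^N)⁻¹ * 2^l) := by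
          apply mul_lt_mul_of_pos_left hl2 (by positivity)
      _ = 2^l := by field_simp
  classical
  set J := Fintype.piFinset (fun _ : Fin N => Finset.range (2*L+1)) with hJ
  set j₀ : Fin N → ℕ := fun _ => L with hj₀
  have hj₀J : j₀ ∈ J := by
    rw [hJ, Fintype.mem_piFinset]
    intro i
    rw [Finset.mem_range]
    simp only [hj₀]
    omega
  set w : (Fin N → ℕ) → ℝ := fun j => ∑ i, ((j i:ℝ) - L) * u i with hw
  set ph : (Fin N → ℕ) → ℝ := fun j => ∑ i, ((j i:ℝ) - L) * θ i with hph
  set z : (Fin N → ℕ) → ℂ := fun j => Complex.exp (((w j : ℝ) : ℂ) * Complex.I) with hz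
  set coef : (Fin N → ℕ) → ℝ := fun j => ∏ i, ((2*L).choose (j i) : ℝ) with hcoef
  set G : ℕ → ℝ := fun m => ∏ i, (Real.cos ((θ i + m * u i)/2))^(2*L) with hG
  have hcoef0 : ∀ j, 0 ≤ coef j := fun j => Finset.prod_nonneg (fun i _ => by positivity)
  -- z j ≠ 1 off the center
  have hz1 : ∀ j ∈ J, j ≠ j₀ → z j ≠ 1 := by
    intro j hjJ hjne h1
    rw [hz] at h1
    rw [Complex.exp_eq_one_iff] at h1
    obtain ⟨p, hp⟩ := h1
    have hwj : ((w j : ℝ) : ℂ) = (((2 * Real.pi * p : ℝ)) : ℂ) := by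
      apply mul_right_cancel₀ Complex.I_ne_zero
      rw [hp]; push_cast; ring
    have hwj' : w j = 2 * Real.pi * p := Complex.ofReal_inj.mp hwj
    have hKne : ∃ i, ((j i : ℤ) - L) ≠ 0 := by
      by_contra hall
      push_neg at hall
      apply hjne
      funext i
      have h2 := hall i
      simp only [hj₀]
      omega
    apply hu (fun i => (j i : ℤ) - L) hKne p
    rw [← hwj', hw]
    exact Finset.sum_congr rfl (fun i _ => by push_cast; ring)
  -- G bounds
  have hfac01 : ∀ (v : ℝ), 0 ≤ (Real.cos v)^(2*L) ∧ (Real.cos v)^(2*L) ≤ 1 := by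
    intro v
    constructor
    · rw [pow_mul]; positivity
    · rw [pow_mul]
      apply pow_le_one₀ (by positivity)
      nlinarith [Real.neg_one_le_cos v, Real.cos_le_one v]
  have hG0 : ∀ m, 0 ≤ G m := fun m =>
    Finset.prod_nonneg (fun i _ => (hfac01 _).1)
  have hGle : ∀ m, G m ≤ (1/2)^L := by
    intro m
    obtain ⟨i0, hi0⟩ := hcon m
    have hbad : (Real.cos ((θ i0 + m * u i0)/2))^(2*L) ≤ (1/2)^L := by
      have hcm := Real.cos_two_mul ((θ i0 + m*u i0)/2)
      rw [show 2*((θ i0 + m*u i0)/2) = θ i0 + m*u i0 by ring] at hcm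
      have h2 : (Real.cos ((θ i0 + m*u i0)/2))^2 ≤ 1/2 := by nlinarith
      calc (Real.cos ((θ i0 + m*u i0)/2))^(2*L) = ((Real.cos ((θ i0 + m*u i0)/2))^2)^L := by
            rw [← pow_mul]
        _ ≤ (1/2)^L := pow_le_pow_left₀ (sq_nonneg _) h2 L
    calc G m = (Real.cos ((θ i0 + m * u i0)/2))^(2*L)
          * ∏ i ∈ Finset.univ.erase i0, (Real.cos ((θ i + m * u i)/2))^(2*L) :=
          (Finset.mul_prod_erase _ _ (Finset.mem_univ i0)).symm
      _ ≤ (1/2)^L * 1 := by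
          apply mul_le_mul hbad
            (Finset.prod_le_one (fun i _ => (hfac01 _).1) (fun i _ => (hfac01 _).2))
            (Finset.prod_nonneg (fun i _ => (hfac01 _).1)) (by positivity)
      _ = (1/2)^L := mul_one _
  -- per-m expansion
  have hsplit : ∀ (j : Fin N → ℕ) (m : ℕ), (∑ i, ((j i:ℝ) - L) * (θ i + m * u i)) = ph j + m * w j := by
    intro j m
    rw [hph, hw, Finset.mul_sum, ← Finset.sum_add_distrib]
    exact Finset.sum_congr rfl (fun i _ => by ring)
  have hexp : ∀ (j : Fin N → ℕ) (m : ℕ),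
      Complex.exp (((ph j + m * w j : ℝ) : ℂ) * Complex.I)
        = Complex.exp (((ph j : ℝ) : ℂ) * Complex.I) * (z j)^m := by
    intro j m
    rw [hz, ← Complex.exp_nat_mul, ← Complex.exp_add]
    congr 1
    push_cast
    ring
  have hBm : ∀ m : ℕ, ((4:ℂ))^(L*N) * ((G m : ℝ) : ℂ)
      = ∑ j ∈ J, ((coef j : ℝ) : ℂ) * (Complex.exp (((ph j : ℝ) : ℂ) * Complex.I) * (z j)^m) := by
    intro m
    have hB := lemB N L (fun i => θ i + m * u i)
    rw [hG]
    rw [hB]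
    refine Finset.sum_congr rfl (fun j hj => ?_)
    rw [← hexp j m, ← hsplit j m]
  -- sum over m < M
  have hsum : ∀ M : ℕ, ((4:ℂ))^(L*N) * (((∑ m ∈ Finset.range M, G m : ℝ)) : ℂ)
      = (coef j₀ : ℂ) * M
        + ∑ j ∈ J.erase j₀, ((coef j : ℝ) : ℂ) * Complex.exp (((ph j : ℝ) : ℂ) * Complex.I)
            * (∑ m ∈ Finset.range M, (z j)^m) := by
    intro M
    have h1 : ((4:ℂ))^(L*N) * (((∑ m ∈ Finset.range M, G m : ℝ)) : ℂ)
        = ∑ m ∈ Finset.range M, ((4:ℂ))^(L*N) * ((G m : ℝ) : ℂ) := by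
      push_cast
      rw [Finset.mul_sum]
    rw [h1]
    rw [Finset.sum_congr rfl (fun m _ => hBm m)]
    rw [Finset.sum_comm]
    have h2 : ∀ j ∈ J, ∑ m ∈ Finset.range M, ((coef j : ℝ) : ℂ)
          * (Complex.exp (((ph j : ℝ) : ℂ) * Complex.I) * (z j)^m)
        = ((coef j : ℝ) : ℂ) * Complex.exp (((ph j : ℝ) : ℂ) * Complex.I)
          * (∑ m ∈ Finset.range M, (z j)^m) := by
      intro j _
      rw [Finset.mul_sum]
      exact Finset.sum_congr rfl (fun m _ => by ring)
    rw [Finset.sum_congr rfl h2]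
    rw [← Finset.add_sum_erase _ _ hj₀J]
    congr 1
    -- the j₀ term
    have hphj₀ : ph j₀ = 0 := by
      rw [hph, hj₀]
      simp
    have hwj₀ : w j₀ = 0 := by
      rw [hw, hj₀]
      simp
    have hzj₀ : z j₀ = 1 := by
      simp only [hz]
      rw [hwj₀]
      simp
    rw [hphj₀, hzj₀]
    simp
  -- the constant D
  set D : ℝ := ∑ j ∈ J.erase j₀, coef j * (2 / ‖z j - 1‖) with hD
  have hR : ∀ M : ℕ, ‖∑ j ∈ J.erase j₀, ((coef j : ℝ) : ℂ)
      * Complex.exp (((ph j : ℝ) : ℂ) * Complex.I) * (∑ m ∈ Finset.range M, (z j)^m)‖ ≤ D := by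
    intro M
    refine (norm_sum_le _ _).trans ?_
    rw [hD]
    refine Finset.sum_le_sum (fun j hj => ?_)
    have hzne : z j ≠ 1 := hz1 j (Finset.mem_of_mem_erase hj) (Finset.ne_of_mem_erase hj)
    have hznorm : ‖z j‖ = 1 := by
      rw [hz, Complex.norm_exp_ofReal_mul_I]
    rw [norm_mul, norm_mul]
    have e1 : ‖((coef j : ℝ) : ℂ)‖ = coef j := by
      rw [Complex.norm_real, Real.norm_eq_abs, _root_.abs_of_nonneg (hcoef0 j)]
    have e2 : ‖Complex.exp (((ph j : ℝ) : ℂ) * Complex.I)‖ = 1 := by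
      rw [Complex.norm_exp_ofReal_mul_I]
    rw [e1, e2, mul_one]
    apply mul_le_mul_of_nonneg_left _ (hcoef0 j)
    rw [geom_sum_eq hzne, norm_div]
    have hden : 0 < ‖z j - 1‖ := norm_pos_iff.mpr (sub_ne_zero.mpr hzne)
    have hnum : ‖z j ^ M - 1‖ ≤ 2 := by
      calc ‖z j ^ M - 1‖ ≤ ‖z j ^ M‖ + ‖(1:ℂ)‖ := norm_sub_le _ _
        _ = 1 + 1 := by rw [norm_pow, hznorm, one_pow, norm_one]
        _ = 2 := by norm_num
    gcongr
  -- final contradiction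
  have hfinal : ∀ M : ℕ, (M:ℝ) * (coef j₀ - 4^(L*N) * (1/2)^L) ≤ D := by
    intro M
    have h1 := hsum M
    have h2 : ((4^(L*N) * (∑ m ∈ Finset.range M, G m) - coef j₀ * M : ℝ) : ℂ)
        = ∑ j ∈ J.erase j₀, ((coef j : ℝ) : ℂ) * Complex.exp (((ph j : ℝ) : ℂ) * Complex.I)
            * (∑ m ∈ Finset.range M, (z j)^m) := by
      push_cast
      push_cast at h1
      linear_combination h1
    have h3 : |4^(L*N) * (∑ m ∈ Finset.range M, G m) - coef j₀ * M| ≤ D := by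
      have hh := hR M
      rw [← h2] at hh
      rwa [Complex.norm_real, Real.norm_eq_abs] at hh
    have h4 : ∑ m ∈ Finset.range M, G m ≤ M * (1/2)^L := by
      calc ∑ m ∈ Finset.range M, G m ≤ ∑ _m ∈ Finset.range M, (1/2:ℝ)^L :=
            Finset.sum_le_sum (fun m _ => hGle m)
        _ = M * (1/2)^L := by rw [Finset.sum_const, Finset.card_range]; simp
    have h5 : coef j₀ * M - D ≤ 4^(L*N) * (∑ m ∈ Finset.range M, G m) := by
      have hh := abs_le.mp h3
      linarith [hh.1]
    have h6 : (4:ℝ)^(L*N) * (∑ m ∈ Finset.range M, G m) ≤ 4^(L*N) * (M * (1/2)^L) :=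
      mul_le_mul_of_nonneg_left h4 (by positivity)
    nlinarith
  have hpos : 0 < coef j₀ - 4^(L*N) * (1/2)^L := by
    have hcoefj₀ : coef j₀ = (((2*L).choose L : ℝ))^N := by
      simp only [hcoef, hj₀]
      rw [Finset.prod_const, Finset.card_univ, Fintype.card_fin]
    have hcb : (4:ℝ)^L ≤ (2*(L:ℝ)+1) * ((2*L).choose L) := by
      exact_mod_cast Nat.four_pow_le_two_mul_add_one_mul_central_binom L
    have hq : (4:ℝ)^L / (2*(L:ℝ)+1) ≤ ((2*L).choose L : ℝ) := by
      rw [div_le_iff₀ (by positivity)]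
      linarith [hcb]
    have h7 : ((4:ℝ)^L / (2*(L:ℝ)+1))^N ≤ coef j₀ := by
      rw [hcoefj₀]
      exact pow_le_pow_left₀ (by positivity) hq N
    have h8 : (4:ℝ)^(L*N) * (1/2)^L < ((4:ℝ)^L / (2*(L:ℝ)+1))^N := by
      have e1 : ((4:ℝ)^L / (2*(L:ℝ)+1))^N = (4:ℝ)^(L*N) / (2*(L:ℝ)+1)^N := by
        rw [div_pow, ← pow_mul]
      have e2 : (4:ℝ)^(L*N) * (1/2)^L = (4:ℝ)^(L*N) / 2^L := by
        rw [one_div, inv_pow, div_eq_mul_inv]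
      rw [e1, e2]
      exact div_lt_div_of_pos_left (by positivity) (by positivity) hL
    linarith
  obtain ⟨M, hM⟩ := exists_nat_gt (D / (coef j₀ - 4^(L*N) * (1/2)^L))
  have hfM := hfinal M
  rw [div_lt_iff₀ hpos] at hM
  linarith

lemma sign_identity (A c d σa αa : ℝ) (hσ : σa = 1 ∨ σa = -1) (hα : αa = 1 ∨ αa = -1)
    (hd : d = αa * σa * (Real.pi/2) - σa * (c/2)) :
    αa * (Real.cos A - Real.cos (σa * A + c)) = 2 * Real.sin (c/2) * Real.cos (A - d) := by
  have pyth := Real.sin_sq_add_cos_sq (c/2)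
  have hcc : Real.cos c = 2 * Real.cos (c/2)^2 - 1 := by
    have h := Real.cos_two_mul (c/2); rw [show 2*(c/2) = c by ring] at h; exact h
  have hss : Real.sin c = 2 * Real.sin (c/2) * Real.cos (c/2) := by
    have h := Real.sin_two_mul (c/2); rw [show 2*(c/2) = c by ring] at h; rw [h]
  rcases hσ with rfl | rfl <;> rcases hα with rfl | rfl <;> subst hd
  · have e1 : Real.cos (1*A + c) = Real.cos A * Real.cos c - Real.sin A * Real.sin c := by
      rw [one_mul, Real.cos_add]
    have e2 : Real.cos (A - (1*1*(Real.pi/2) - 1*(c/2))) = Real.sin (A + c/2) := by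
      rw [show A - (1*1*(Real.pi/2) - 1*(c/2)) = (A + c/2) - Real.pi/2 by ring,
        Real.cos_sub_pi_div_two]
    rw [e1, e2, Real.sin_add]
    linear_combination (-Real.cos A) * hcc + (Real.sin A) * hss + (-2*Real.cos A) * pyth
  · have e1 : Real.cos (1*A + c) = Real.cos A * Real.cos c - Real.sin A * Real.sin c := by
      rw [one_mul, Real.cos_add]
    have e2 : Real.cos (A - (-1*1*(Real.pi/2) - 1*(c/2))) = -Real.sin (A + c/2) := by
      rw [show A - (-1*1*(Real.pi/2) - 1*(c/2)) = (A + c/2) + Real.pi/2 by ring,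
        Real.cos_add_pi_div_two]
    rw [e1, e2, Real.sin_add]
    linear_combination (Real.cos A) * hcc + (-Real.sin A) * hss + (2*Real.cos A) * pyth
  · have e1 : Real.cos (-1*A + c) = Real.cos A * Real.cos c + Real.sin A * Real.sin c := by
      rw [show -1*A + c = -(A - c) by ring, Real.cos_neg, Real.cos_sub]
    have e2 : Real.cos (A - (1*(-1)*(Real.pi/2) - -1*(c/2))) = -Real.sin (A - c/2) := by
      rw [show A - (1*(-1)*(Real.pi/2) - -1*(c/2)) = (A - c/2) + Real.pi/2 by ring,
        Real.cos_add_pi_div_two]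
    rw [e1, e2, Real.sin_sub]
    linear_combination (-Real.cos A) * hcc + (-Real.sin A) * hss + (-2*Real.cos A) * pyth
  · have e1 : Real.cos (-1*A + c) = Real.cos A * Real.cos c + Real.sin A * Real.sin c := by
      rw [show -1*A + c = -(A - c) by ring, Real.cos_neg, Real.cos_sub]
    have e2 : Real.cos (A - (-1*(-1)*(Real.pi/2) - -1*(c/2))) = Real.sin (A - c/2) := by
      rw [show A - (-1*(-1)*(Real.pi/2) - -1*(c/2)) = (A - c/2) - Real.pi/2 by ring,
        Real.cos_sub_pi_div_two]
    rw [e1, e2, Real.sin_sub]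
    linear_combination (Real.cos A) * hcc + (Real.sin A) * hss + (2*Real.cos A) * pyth

theorem lissajous_stmt16 (n₁ : ℕ) (hp : n₁.Prime) (N : ℕ) (t : Fin N → ℝ)
    (ht : ∀ i, t i ∈ Set.Ico (0:ℝ) 1)
    (hind : ∀ (q : Fin N → ℚ) (q0 : ℚ), (∑ i, (q i : ℝ) * t i) + (q0 : ℝ) = 0 →
      (∀ i, q i = 0) ∧ q0 = 0)
    (σ : Fin N → ℝ) (hσ : ∀ i, σ i = 1 ∨ σ i = -1)
    (k : Fin N → ℕ) (hk : ∀ i, 0 < k i ∧ k i < n₁)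
    (s : Fin N → ℝ) (hs : ∀ i, s i = σ i * t i + (k i : ℝ) / n₁)
    (α : Fin N → ℝ) (hα : ∀ i, α i = 1 ∨ α i = -1) :
    ∃ n₄ : ℕ, 0 < n₄ ∧ ∀ i, 0 < α i *
      (Real.cos (2 * Real.pi * n₄ * t i) - Real.cos (2 * Real.pi * n₄ * s i)) := by
  have hn₁ : 0 < (n₁:ℝ) := by exact_mod_cast hp.pos
  set c : Fin N → ℝ := fun i => 2 * Real.pi * (k i) / n₁ with hc
  set d : Fin N → ℝ := fun i => α i * σ i * (Real.pi/2) - σ i * (c i / 2) with hd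
  have hu : ∀ K : Fin N → ℤ, (∃ i, K i ≠ 0) → ∀ p : ℤ,
      (∑ i, (K i : ℝ) * (2 * Real.pi * (2*n₁) * t i)) ≠ 2 * Real.pi * p := by
    intro K hK p hKp
    have hsum : ∑ i, (K i:ℝ) * (2*Real.pi*(2*n₁)*t i)
        = 2*Real.pi * ∑ i, (2*(n₁:ℝ)*(K i)) * t i := by
      rw [Finset.mul_sum]; exact Finset.sum_congr rfl (fun i _ => by ring)
    rw [hsum] at hKp
    have h2pi : (2*Real.pi) ≠ 0 := by positivity
    have hS : (∑ i, (2*(n₁:ℝ)*(K i)) * t i) = p := mul_left_cancel₀ h2pi hKp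
    set q : Fin N → ℚ := fun i => 2*(n₁:ℚ)*(K i) with hq
    have h0 : (∑ i, ((q i : ℝ)) * t i) + ((-p : ℚ) : ℝ) = 0 := by
      have : ∀ i, ((q i : ℝ)) = 2*(n₁:ℝ)*(K i) := by intro i; rw [hq]; push_cast; ring
      rw [Finset.sum_congr rfl (fun i _ => by rw [this i])]
      push_cast
      rw [hS]; ring
    obtain ⟨hq0, -⟩ := hind q (-p) h0
    obtain ⟨i0, hi0⟩ := hK
    apply hi0
    have := hq0 i0
    rw [hq] at this
    have hn1q : (2*(n₁:ℚ)) ≠ 0 := by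
      have : (n₁:ℚ) ≠ 0 := by exact_mod_cast hp.pos.ne'
      positivity
    have hcast : ((K i0 : ℚ)) = 0 := by
      rcases mul_eq_zero.mp this with h | h
      · exact absurd h hn1q
      · exact h
    exact_mod_cast hcast
  obtain ⟨m, hm⟩ := kron_semicircle N (fun i => 2 * Real.pi * (2*n₁) * t i)
      (fun i => 2 * Real.pi * t i - d i) hu
  refine ⟨1 + 2*n₁*m, by positivity, fun i => ?_⟩
  set A := 2 * Real.pi * ((1 + 2*n₁*m : ℕ) : ℝ) * t i with hA
  have hAd : 2 * Real.pi * t i - d i + m * (2 * Real.pi * (2*n₁) * t i) = A - d i := by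
    rw [hA]; push_cast; ring
  have hcos : 0 < Real.cos (A - d i) := by rw [← hAd]; exact hm i
  have hsin : 0 < Real.sin (c i / 2) := by
    have hk1 : (0:ℝ) < k i := by exact_mod_cast (hk i).1
    have hk2 : (k i : ℝ) < n₁ := by exact_mod_cast (hk i).2
    apply Real.sin_pos_of_pos_of_lt_pi
    · rw [hc]; positivity
    · have : c i / 2 = Real.pi * ((k i) / n₁) := by rw [hc]; ring
      rw [this]
      calc Real.pi * ((k i) / n₁) < Real.pi * 1 := by
            apply mul_lt_mul_of_pos_left _ Real.pi_pos
            rw [div_lt_one hn₁]; exact hk2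
        _ = Real.pi := mul_one _
  have hcs : Real.cos (2 * Real.pi * ((1 + 2*n₁*m : ℕ):ℝ) * s i)
      = Real.cos (σ i * A + c i) := by
    rw [hs i]
    have hn1' : (n₁:ℝ) ≠ 0 := ne_of_gt hn₁
    have : 2 * Real.pi * ((1 + 2*n₁*m : ℕ):ℝ) * (σ i * t i + (k i : ℝ) / n₁)
        = σ i * A + c i + ((2 * m * k i : ℕ) : ℤ) * (2 * Real.pi) := by
      rw [hA, hc]; push_cast; field_simp; ring
    rw [this, Real.cos_add_int_mul_two_pi]
  rw [hcs]
  have key := sign_identity A (c i) (d i) (σ i) (α i) (hσ i) (hα i) (by rw [hd])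
  rw [key]
  positivity
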